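/- arXiv:2104.02280 — 2 statements merged into one kernel-verified Lean document; each statement's English description precedes it below -/
import Mathlib

section
/- Let n ≥ 5 and let A be the n×n clamped-free beam matrix. Then A is invertible and every entry of A⁻¹ is strictly positive: (A⁻¹)_{i,j} > 0 for all 1 ≤ i, j ≤ n. -/
open scoped ENNReal

/-- The `n × n` clamped-free beam matrix (1-based index `i' = i+1`). -/
def A_CF (n : ℕ) : Matrix (Fin n) (Fin n) ℝ :=
  Matrix.of fun i j =>
    let i' := (i : ℕ) + 1
    let j' := (j : ℕ) + 1
    if i' = j' then (if i' = 1 then 7 else if i' = n - 1 then 5 else if i' = n then 2 else 6)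
    else if j' = i' + 1 then (if i' = n - 1 then -2 else -4)
    else if i' = j' + 1 then -4
    else if j' = i' + 2 then 1
    else if i' = j' + 2 then (if i' = n then 2 else 1)
    else 0

/-- Entry of the beam matrix as a function of natural-number indices (0-based). -/
noncomputable def aN (n i j : ℕ) : ℝ :=
  if i + 1 = j + 1 then
    (if i + 1 = 1 then 7 else if i + 1 = n - 1 then 5 else if i + 1 = n then 2 else 6)
  else if j + 1 = (i + 1) + 1 then (if i + 1 = n - 1 then -2 else -4)
  else if i + 1 = (j + 1) + 1 then -4
  else if j + 1 = (i + 1) + 2 then 1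
  else if i + 1 = (j + 1) + 2 then (if i + 1 = n then 2 else 1)
  else 0

/-- Green's function for the clamped-free beam (0-based indices). -/
noncomputable def GG (k j : ℕ) : ℝ :=
  ((min k j : ℕ) + 1 : ℝ) *
    (3 * ((k : ℝ) + 1) * ((j : ℝ) + 1) - ((min k j : ℕ) + 1 : ℝ) ^ 2 + 1) / 6

/-- Candidate inverse entry. -/
noncomputable def bN (n k j : ℕ) : ℝ := GG k j * (if j + 1 = n then 1 / 2 else 1)

/-- Candidate inverse matrix. -/
noncomputable def B_CF (n : ℕ) : Matrix (Fin n) (Fin n) ℝ :=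
  Matrix.of fun i j => bN n (i : ℕ) (j : ℕ)

lemma aN_eq_zero {n i k : ℕ} (h : i + 2 < k ∨ k + 2 < i) : aN n i k = 0 := by
  unfold aN
  rw [if_neg (by omega), if_neg (by omega), if_neg (by omega), if_neg (by omega),
    if_neg (by omega)]

lemma GG_pos (k j : ℕ) : 0 < GG k j := by
  unfold GG
  have h1 : ((min k j : ℕ) : ℝ) ≤ (k : ℝ) := by exact_mod_cast min_le_left k j
  have h2 : ((min k j : ℕ) : ℝ) ≤ (j : ℝ) := by exact_mod_cast min_le_right k j
  have h0 : (0 : ℝ) ≤ ((min k j : ℕ) : ℝ) := Nat.cast_nonneg _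
  apply div_pos ?_ (by norm_num)
  have hkj : (((min k j : ℕ) : ℝ) + 1) ^ 2 ≤ ((k : ℝ) + 1) * ((j : ℝ) + 1) := by nlinarith
  nlinarith

lemma sum_window {n : ℕ} (f : ℕ → ℝ) (s : Finset ℕ) (hs : s ⊆ Finset.range n)
    (h : ∀ k ∈ Finset.range n, k ∉ s → f k = 0) :
    ∑ k ∈ Finset.range n, f k = ∑ k ∈ s, f k :=
  (Finset.sum_subset hs h).symm

lemma key2 {n i j : ℕ} (hn : 5 ≤ n) (hi : i < n) (hj : j < n) :
    ∑ k ∈ Finset.range n, aN n i k * GG k j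
      = if i = j then (if i + 1 = n then 2 else 1) else 0 := by
  have hcase : i = 0 ∨ i = 1 ∨ (2 ≤ i ∧ i + 3 ≤ n) ∨ i + 2 = n ∨ i + 1 = n := by omega
  rcases hcase with rfl | rfl | ⟨h2, h3⟩ | hE | hE
  · -- i = 0
    rw [sum_window (fun k => aN n 0 k * GG k j) {0, 1, 2}
        (by intro x hx
            simp only [Finset.mem_insert, Finset.mem_singleton] at hx
            simp only [Finset.mem_range]; omega)
        (by intro k hk hks
            simp only [Finset.mem_insert, Finset.mem_singleton] at hks
            exact mul_eq_zero_of_left (aN_eq_zero (by omega)) _)]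
    rw [Finset.sum_insert (by simp only [Finset.mem_insert, Finset.mem_singleton]; omega),
        Finset.sum_insert (by simp only [Finset.mem_singleton]; omega),
        Finset.sum_singleton]
    rw [show aN n 0 0 = 7 by unfold aN; rw [if_pos rfl, if_pos rfl]]
    rw [show aN n 0 1 = -4 by
      unfold aN; rw [if_neg (by omega), if_pos (by omega), if_neg (by omega)]]
    rw [show aN n 0 2 = 1 by
      unfold aN; rw [if_neg (by omega), if_neg (by omega), if_neg (by omega), if_pos (by omega)]]
    rcases (by omega : j = 0 ∨ j = 1 ∨ 2 ≤ j) with rfl | rfl | hj'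
    · rw [if_pos rfl, if_neg (by omega)]
      simp only [GG]
      norm_num
    · rw [if_neg (by omega)]
      simp only [GG]
      norm_num
    · rw [if_neg (by omega)]
      simp only [GG]
      rw [show min 0 j = 0 by omega, show min 1 j = 1 by omega, show min 2 j = 2 by omega]
      push_cast
      ring
  · -- i = 1
    rw [sum_window (fun k => aN n 1 k * GG k j) {0, 1, 2, 3}
        (by intro x hx
            simp only [Finset.mem_insert, Finset.mem_singleton] at hx
            simp only [Finset.mem_range]; omega)
        (by intro k hk hks
            simp only [Finset.mem_insert, Finset.mem_singleton] at hks
            exact mul_eq_zero_of_left (aN_eq_zero (by omega)) _)]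
    rw [Finset.sum_insert (by simp only [Finset.mem_insert, Finset.mem_singleton]; omega),
        Finset.sum_insert (by simp only [Finset.mem_insert, Finset.mem_singleton]; omega),
        Finset.sum_insert (by simp only [Finset.mem_singleton]; omega),
        Finset.sum_singleton]
    rw [show aN n 1 0 = -4 by
      unfold aN; rw [if_neg (by omega), if_neg (by omega), if_pos (by omega)]]
    rw [show aN n 1 1 = 6 by
      unfold aN; rw [if_pos rfl, if_neg (by omega), if_neg (by omega), if_neg (by omega)]]
    rw [show aN n 1 2 = -4 by
      unfold aN; rw [if_neg (by omega), if_pos (by omega), if_neg (by omega)]]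
    rw [show aN n 1 3 = 1 by
      unfold aN; rw [if_neg (by omega), if_neg (by omega), if_neg (by omega), if_pos (by omega)]]
    rcases (by omega : j = 0 ∨ j = 1 ∨ j = 2 ∨ 3 ≤ j) with rfl | rfl | rfl | hj'
    · rw [if_neg (by omega)]
      simp only [GG]
      norm_num
    · rw [if_pos rfl, if_neg (by omega)]
      simp only [GG]
      norm_num
    · rw [if_neg (by omega)]
      simp only [GG]
      norm_num
    · rw [if_neg (by omega)]
      simp only [GG]
      rw [show min 0 j = 0 by omega, show min 1 j = 1 by omega, show min 2 j = 2 by omega,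
          show min 3 j = 3 by omega]
      push_cast
      ring
  · -- interior: 2 ≤ i, i + 3 ≤ n
    obtain ⟨m, rfl⟩ : ∃ m, i = m + 2 := ⟨i - 2, by omega⟩
    rw [sum_window (fun k => aN n (m + 2) k * GG k j) {m, m + 1, m + 2, m + 3, m + 4}
        (by intro x hx
            simp only [Finset.mem_insert, Finset.mem_singleton] at hx
            simp only [Finset.mem_range]; omega)
        (by intro k hk hks
            simp only [Finset.mem_insert, Finset.mem_singleton] at hks
            exact mul_eq_zero_of_left (aN_eq_zero (by omega)) _)]
    rw [Finset.sum_insert (by simp only [Finset.mem_insert, Finset.mem_singleton]; omega),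
        Finset.sum_insert (by simp only [Finset.mem_insert, Finset.mem_singleton]; omega),
        Finset.sum_insert (by simp only [Finset.mem_insert, Finset.mem_singleton]; omega),
        Finset.sum_insert (by simp only [Finset.mem_singleton]; omega),
        Finset.sum_singleton]
    rw [show aN n (m + 2) m = 1 by
      unfold aN
      rw [if_neg (by omega), if_neg (by omega), if_neg (by omega), if_neg (by omega),
        if_pos (by omega), if_neg (by omega)]]
    rw [show aN n (m + 2) (m + 1) = -4 by
      unfold aN; rw [if_neg (by omega), if_neg (by omega), if_pos (by omega)]]
    rw [show aN n (m + 2) (m + 2) = 6 by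
      unfold aN
      rw [if_pos rfl, if_neg (by omega), if_neg (by omega), if_neg (by omega)]]
    rw [show aN n (m + 2) (m + 3) = -4 by
      unfold aN; rw [if_neg (by omega), if_pos (by omega), if_neg (by omega)]]
    rw [show aN n (m + 2) (m + 4) = 1 by
      unfold aN
      rw [if_neg (by omega), if_neg (by omega), if_neg (by omega), if_pos (by omega)]]
    rcases (by omega : j ≤ m ∨ j = m + 1 ∨ j = m + 2 ∨ j = m + 3 ∨ m + 4 ≤ j) with
      hj' | rfl | rfl | rfl | hj'
    · rw [if_neg (by omega)]
      simp only [GG]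
      rw [show min m j = j by omega, show min (m + 1) j = j by omega,
          show min (m + 2) j = j by omega, show min (m + 3) j = j by omega,
          show min (m + 4) j = j by omega]
      push_cast
      ring
    · rw [if_neg (by omega)]
      simp only [GG]
      rw [show min m (m + 1) = m by omega, show min (m + 1) (m + 1) = m + 1 by omega,
          show min (m + 2) (m + 1) = m + 1 by omega, show min (m + 3) (m + 1) = m + 1 by omega,
          show min (m + 4) (m + 1) = m + 1 by omega]
      push_cast
      ring
    · rw [if_pos rfl, if_neg (by omega)]
      simp only [GG]
      rw [show min m (m + 2) = m by omega, show min (m + 1) (m + 2) = m + 1 by omega,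
          show min (m + 2) (m + 2) = m + 2 by omega, show min (m + 3) (m + 2) = m + 2 by omega,
          show min (m + 4) (m + 2) = m + 2 by omega]
      push_cast
      ring
    · rw [if_neg (by omega)]
      simp only [GG]
      rw [show min m (m + 3) = m by omega, show min (m + 1) (m + 3) = m + 1 by omega,
          show min (m + 2) (m + 3) = m + 2 by omega, show min (m + 3) (m + 3) = m + 3 by omega,
          show min (m + 4) (m + 3) = m + 3 by omega]
      push_cast
      ring
    · rw [if_neg (by omega)]
      simp only [GG]
      rw [show min m j = m by omega, show min (m + 1) j = m + 1 by omega,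
          show min (m + 2) j = m + 2 by omega, show min (m + 3) j = m + 3 by omega,
          show min (m + 4) j = m + 4 by omega]
      push_cast
      ring
  · -- i + 2 = n
    obtain ⟨p, rfl⟩ : ∃ p, n = p + 5 := ⟨n - 5, by omega⟩
    obtain rfl : i = p + 3 := by omega
    rw [sum_window (fun k => aN (p + 5) (p + 3) k * GG k j) {p + 1, p + 2, p + 3, p + 4}
        (by intro x hx
            simp only [Finset.mem_insert, Finset.mem_singleton] at hx
            simp only [Finset.mem_range]; omega)
        (by intro k hk hks
            simp only [Finset.mem_range] at hk
            simp only [Finset.mem_insert, Finset.mem_singleton] at hks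
            exact mul_eq_zero_of_left (aN_eq_zero (by omega)) _)]
    rw [Finset.sum_insert (by simp only [Finset.mem_insert, Finset.mem_singleton]; omega),
        Finset.sum_insert (by simp only [Finset.mem_insert, Finset.mem_singleton]; omega),
        Finset.sum_insert (by simp only [Finset.mem_singleton]; omega),
        Finset.sum_singleton]
    rw [show aN (p + 5) (p + 3) (p + 1) = 1 by
      unfold aN
      rw [if_neg (by omega), if_neg (by omega), if_neg (by omega), if_neg (by omega),
        if_pos (by omega), if_neg (by omega)]]
    rw [show aN (p + 5) (p + 3) (p + 2) = -4 by
      unfold aN; rw [if_neg (by omega), if_neg (by omega), if_pos (by omega)]]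
    rw [show aN (p + 5) (p + 3) (p + 3) = 5 by
      unfold aN; rw [if_pos rfl, if_neg (by omega), if_pos (by omega)]]
    rw [show aN (p + 5) (p + 3) (p + 4) = -2 by
      unfold aN; rw [if_neg (by omega), if_pos (by omega), if_pos (by omega)]]
    rcases (by omega : j ≤ p + 1 ∨ j = p + 2 ∨ j = p + 3 ∨ j = p + 4) with
      hj' | rfl | rfl | rfl
    · rw [if_neg (by omega)]
      simp only [GG]
      rw [show min (p + 1) j = j by omega, show min (p + 2) j = j by omega,
          show min (p + 3) j = j by omega, show min (p + 4) j = j by omega]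
      push_cast
      ring
    · rw [if_neg (by omega)]
      simp only [GG]
      rw [show min (p + 1) (p + 2) = p + 1 by omega, show min (p + 2) (p + 2) = p + 2 by omega,
          show min (p + 3) (p + 2) = p + 2 by omega, show min (p + 4) (p + 2) = p + 2 by omega]
      push_cast
      ring
    · rw [if_pos rfl, if_neg (by omega)]
      simp only [GG]
      rw [show min (p + 1) (p + 3) = p + 1 by omega, show min (p + 2) (p + 3) = p + 2 by omega,
          show min (p + 3) (p + 3) = p + 3 by omega, show min (p + 4) (p + 3) = p + 3 by omega]
      push_cast
      ring
    · rw [if_neg (by omega)]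
      simp only [GG]
      rw [show min (p + 1) (p + 4) = p + 1 by omega, show min (p + 2) (p + 4) = p + 2 by omega,
          show min (p + 3) (p + 4) = p + 3 by omega, show min (p + 4) (p + 4) = p + 4 by omega]
      push_cast
      ring
  · -- i + 1 = n
    obtain ⟨p, rfl⟩ : ∃ p, n = p + 5 := ⟨n - 5, by omega⟩
    obtain rfl : i = p + 4 := by omega
    rw [sum_window (fun k => aN (p + 5) (p + 4) k * GG k j) {p + 2, p + 3, p + 4}
        (by intro x hx
            simp only [Finset.mem_insert, Finset.mem_singleton] at hx
            simp only [Finset.mem_range]; omega)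
        (by intro k hk hks
            simp only [Finset.mem_range] at hk
            simp only [Finset.mem_insert, Finset.mem_singleton] at hks
            exact mul_eq_zero_of_left (aN_eq_zero (by omega)) _)]
    rw [Finset.sum_insert (by simp only [Finset.mem_insert, Finset.mem_singleton]; omega),
        Finset.sum_insert (by simp only [Finset.mem_singleton]; omega),
        Finset.sum_singleton]
    rw [show aN (p + 5) (p + 4) (p + 2) = 2 by
      unfold aN
      rw [if_neg (by omega), if_neg (by omega), if_neg (by omega), if_neg (by omega),
        if_pos (by omega), if_pos (by omega)]]
    rw [show aN (p + 5) (p + 4) (p + 3) = -4 by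
      unfold aN; rw [if_neg (by omega), if_neg (by omega), if_pos (by omega)]]
    rw [show aN (p + 5) (p + 4) (p + 4) = 2 by
      unfold aN; rw [if_pos rfl, if_neg (by omega), if_neg (by omega), if_pos (by omega)]]
    rcases (by omega : j ≤ p + 2 ∨ j = p + 3 ∨ j = p + 4) with hj' | rfl | rfl
    · rw [if_neg (by omega)]
      simp only [GG]
      rw [show min (p + 2) j = j by omega, show min (p + 3) j = j by omega,
          show min (p + 4) j = j by omega]
      push_cast
      ring
    · rw [if_neg (by omega)]
      simp only [GG]
      rw [show min (p + 2) (p + 3) = p + 2 by omega, show min (p + 3) (p + 3) = p + 3 by omega,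
          show min (p + 4) (p + 3) = p + 3 by omega]
      push_cast
      ring
    · rw [if_pos rfl, if_pos (by omega)]
      simp only [GG]
      rw [show min (p + 2) (p + 4) = p + 2 by omega, show min (p + 3) (p + 4) = p + 3 by omega,
          show min (p + 4) (p + 4) = p + 4 by omega]
      push_cast
      ring

lemma key {n i j : ℕ} (hn : 5 ≤ n) (hi : i < n) (hj : j < n) :
    ∑ k ∈ Finset.range n, aN n i k * bN n k j = if i = j then 1 else 0 := by
  have h : ∀ k, aN n i k * bN n k j
      = (aN n i k * GG k j) * (if j + 1 = n then (1 / 2 : ℝ) else 1) := by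
    intro k; unfold bN; ring
  simp only [h]
  rw [← Finset.sum_mul, key2 hn hi hj]
  rcases eq_or_ne i j with rfl | hij
  · rw [if_pos rfl, if_pos rfl]
    by_cases hin : i + 1 = n
    · rw [if_pos hin, if_pos hin]; norm_num
    · rw [if_neg hin, if_neg hin]; norm_num
  · rw [if_neg hij, if_neg hij, zero_mul]

/-- The clamped-free beam matrix is invertible and its inverse has strictly
positive entries. -/
theorem A_CF_invertible_and_inv_pos (n : ℕ) (hn : 5 ≤ n) :
    IsUnit (A_CF n) ∧ ∀ i j : Fin n, 0 < (A_CF n)⁻¹ i j := by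
  have hAB : A_CF n * B_CF n = 1 := by
    ext i j
    rw [Matrix.mul_apply]
    have hsum : ∑ k : Fin n, A_CF n i k * B_CF n k j
        = ∑ k ∈ Finset.range n, aN n (i : ℕ) k * bN n k (j : ℕ) := by
      rw [← Fin.sum_univ_eq_sum_range (fun k => aN n (i : ℕ) k * bN n k (j : ℕ)) n]
      rfl
    rw [hsum, key hn i.isLt j.isLt]
    simp [Matrix.one_apply, Fin.val_eq_val]
  refine ⟨(Matrix.isUnit_iff_isUnit_det _).2 (Matrix.isUnit_det_of_right_inverse hAB), ?_⟩
  intro i j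
  rw [Matrix.inv_eq_right_inv hAB]
  show 0 < bN n (i : ℕ) (j : ℕ)
  unfold bN
  apply mul_pos (GG_pos _ _)
  split <;> norm_num
end

section
/- Let n ≥ 5, let A be the n×n clamped-free beam matrix, let K > 0 and h > 0, and suppose u ∈ ℝⁿ satisfies the nonlinear finite-difference system (A u)_i = h⁴ K e^{−u_i} for every i = 1, …, n. Then u is positive and strictly increasing: 0 < u₁ and u_i < u_{i+1} for all i = 1, …, n−1. -/
open scoped ENNReal

lemma A_CF_apply (n : ℕ) (i j : Fin n) : A_CF n i j =
    (if (i : ℕ) + 1 = (j : ℕ) + 1 then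
      (if (i : ℕ) + 1 = 1 then 7 else if (i : ℕ) + 1 = n - 1 then 5
        else if (i : ℕ) + 1 = n then 2 else 6)
    else if (j : ℕ) + 1 = (i : ℕ) + 2 then (if (i : ℕ) + 1 = n - 1 then -2 else -4)
    else if (i : ℕ) + 1 = (j : ℕ) + 2 then -4
    else if (j : ℕ) + 1 = (i : ℕ) + 3 then 1
    else if (i : ℕ) + 1 = (j : ℕ) + 3 then (if (i : ℕ) + 1 = n then 2 else 1)
    else 0) := rfl

lemma A_CF_eq_zero (n : ℕ) (i j : Fin n)
    (hfar : (j : ℕ) + 2 < (i : ℕ) ∨ (i : ℕ) + 2 < (j : ℕ)) : A_CF n i j = 0 := by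
  rw [A_CF_apply]
  split_ifs <;> (first | (exfalso; omega) | rfl)

lemma dot_eq_sum {n : ℕ} (g : Fin n → ℝ) (s : Finset (Fin n))
    (h0 : ∀ j ∉ s, g j = 0) : ∑ j, g j = ∑ j ∈ s, g j :=
  (Finset.sum_subset s.subset_univ fun x _ hx => h0 x hx).symm

/-- Extension of `u` to all of `ℕ` by zero. -/
noncomputable def ue (n : ℕ) (u : Fin n → ℝ) : ℕ → ℝ := fun k =>
  if h : k < n then u ⟨k, h⟩ else 0

lemma ue_eq (n : ℕ) (u : Fin n → ℝ) (k : ℕ) (h : k < n) : ue n u k = u ⟨k, h⟩ := dif_pos h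

lemma row0 (n : ℕ) (hn : 5 ≤ n) (u : Fin n → ℝ) :
    (A_CF n).mulVec u ⟨0, Nat.lt_of_lt_of_le (by decide) hn⟩ =
      7 * ue n u 0 - 4 * ue n u 1 + ue n u 2 := by
  rw [Matrix.mulVec, dotProduct]
  rw [dot_eq_sum _ ({⟨0, by omega⟩, ⟨1, by omega⟩, ⟨2, by omega⟩} : Finset (Fin n))]
  · rw [Finset.sum_insert (by simp only [Finset.mem_insert, Finset.mem_singleton,
        Fin.ext_iff, Fin.val_mk]; omega),
      Finset.sum_insert (by simp only [Finset.mem_singleton, Fin.ext_iff, Fin.val_mk]; omega),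
      Finset.sum_singleton]
    have h0 : A_CF n ⟨0, by omega⟩ ⟨0, by omega⟩ = 7 := by
      rw [A_CF_apply]; simp only [Fin.val_mk]; split_ifs <;> (first | (exfalso; omega) | norm_num)
    have h1 : A_CF n ⟨0, by omega⟩ ⟨1, by omega⟩ = -4 := by
      rw [A_CF_apply]; simp only [Fin.val_mk]; split_ifs <;> (first | (exfalso; omega) | norm_num)
    have h2 : A_CF n ⟨0, by omega⟩ ⟨2, by omega⟩ = 1 := by
      rw [A_CF_apply]; simp only [Fin.val_mk]; split_ifs <;> (first | (exfalso; omega) | norm_num)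
    rw [h0, h1, h2, ue_eq n u 0 (by omega), ue_eq n u 1 (by omega), ue_eq n u 2 (by omega)]
    ring
  · intro j hj
    simp only [Finset.mem_insert, Finset.mem_singleton, Fin.ext_iff, Fin.val_mk] at hj
    rw [A_CF_eq_zero n _ j (by simp only [Fin.val_mk]; omega), zero_mul]

lemma row1 (n : ℕ) (hn : 5 ≤ n) (u : Fin n → ℝ) :
    (A_CF n).mulVec u ⟨1, by omega⟩ =
      -4 * ue n u 0 + 6 * ue n u 1 - 4 * ue n u 2 + ue n u 3 := by
  rw [Matrix.mulVec, dotProduct]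
  rw [dot_eq_sum _ ({⟨0, by omega⟩, ⟨1, by omega⟩, ⟨2, by omega⟩, ⟨3, by omega⟩} :
      Finset (Fin n))]
  · rw [Finset.sum_insert (by simp only [Finset.mem_insert, Finset.mem_singleton,
        Fin.ext_iff, Fin.val_mk]; omega),
      Finset.sum_insert (by simp only [Finset.mem_insert, Finset.mem_singleton,
        Fin.ext_iff, Fin.val_mk]; omega),
      Finset.sum_insert (by simp only [Finset.mem_singleton, Fin.ext_iff, Fin.val_mk]; omega),
      Finset.sum_singleton]
    have h0 : A_CF n ⟨1, by omega⟩ ⟨0, by omega⟩ = -4 := by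
      rw [A_CF_apply]; simp only [Fin.val_mk]; split_ifs <;> (first | (exfalso; omega) | norm_num)
    have h1 : A_CF n ⟨1, by omega⟩ ⟨1, by omega⟩ = 6 := by
      rw [A_CF_apply]; simp only [Fin.val_mk]; split_ifs <;> (first | (exfalso; omega) | norm_num)
    have h2 : A_CF n ⟨1, by omega⟩ ⟨2, by omega⟩ = -4 := by
      rw [A_CF_apply]; simp only [Fin.val_mk]; split_ifs <;> (first | (exfalso; omega) | norm_num)
    have h3 : A_CF n ⟨1, by omega⟩ ⟨3, by omega⟩ = 1 := by
      rw [A_CF_apply]; simp only [Fin.val_mk]; split_ifs <;> (first | (exfalso; omega) | norm_num)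
    rw [h0, h1, h2, h3, ue_eq n u 0 (by omega), ue_eq n u 1 (by omega),
      ue_eq n u 2 (by omega), ue_eq n u 3 (by omega)]
    ring
  · intro j hj
    simp only [Finset.mem_insert, Finset.mem_singleton, Fin.ext_iff, Fin.val_mk] at hj
    rw [A_CF_eq_zero n _ j (by simp only [Fin.val_mk]; omega), zero_mul]

lemma rowMid (n : ℕ) (hn : 5 ≤ n) (u : Fin n → ℝ) (m : ℕ) (hm2 : 2 ≤ m) (hm3 : m ≤ n - 3) :
    (A_CF n).mulVec u ⟨m, by omega⟩ =
      ue n u (m - 2) - 4 * ue n u (m - 1) + 6 * ue n u m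
        - 4 * ue n u (m + 1) + ue n u (m + 2) := by
  rw [Matrix.mulVec, dotProduct]
  rw [dot_eq_sum _ ({⟨m - 2, by omega⟩, ⟨m - 1, by omega⟩, ⟨m, by omega⟩,
      ⟨m + 1, by omega⟩, ⟨m + 2, by omega⟩} : Finset (Fin n))]
  · rw [Finset.sum_insert (by simp only [Finset.mem_insert, Finset.mem_singleton,
        Fin.ext_iff, Fin.val_mk]; omega),
      Finset.sum_insert (by simp only [Finset.mem_insert, Finset.mem_singleton,
        Fin.ext_iff, Fin.val_mk]; omega),
      Finset.sum_insert (by simp only [Finset.mem_insert, Finset.mem_singleton,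
        Fin.ext_iff, Fin.val_mk]; omega),
      Finset.sum_insert (by simp only [Finset.mem_singleton, Fin.ext_iff, Fin.val_mk]; omega),
      Finset.sum_singleton]
    have h0 : A_CF n ⟨m, by omega⟩ ⟨m - 2, by omega⟩ = 1 := by
      rw [A_CF_apply]; simp only [Fin.val_mk]; split_ifs <;> (first | (exfalso; omega) | norm_num)
    have h1 : A_CF n ⟨m, by omega⟩ ⟨m - 1, by omega⟩ = -4 := by
      rw [A_CF_apply]; simp only [Fin.val_mk]; split_ifs <;> (first | (exfalso; omega) | norm_num)
    have h2 : A_CF n ⟨m, by omega⟩ ⟨m, by omega⟩ = 6 := by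
      rw [A_CF_apply]; simp only [Fin.val_mk]; split_ifs <;> (first | (exfalso; omega) | norm_num)
    have h3 : A_CF n ⟨m, by omega⟩ ⟨m + 1, by omega⟩ = -4 := by
      rw [A_CF_apply]; simp only [Fin.val_mk]; split_ifs <;> (first | (exfalso; omega) | norm_num)
    have h4 : A_CF n ⟨m, by omega⟩ ⟨m + 2, by omega⟩ = 1 := by
      rw [A_CF_apply]; simp only [Fin.val_mk]; split_ifs <;> (first | (exfalso; omega) | norm_num)
    rw [h0, h1, h2, h3, h4, ue_eq n u (m - 2) (by omega), ue_eq n u (m - 1) (by omega),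
      ue_eq n u m (by omega), ue_eq n u (m + 1) (by omega), ue_eq n u (m + 2) (by omega)]
    ring
  · intro j hj
    simp only [Finset.mem_insert, Finset.mem_singleton, Fin.ext_iff, Fin.val_mk] at hj
    rw [A_CF_eq_zero n _ j (by simp only [Fin.val_mk]; omega), zero_mul]

lemma rowN2 (n : ℕ) (hn : 5 ≤ n) (u : Fin n → ℝ) :
    (A_CF n).mulVec u ⟨n - 2, by omega⟩ =
      ue n u (n - 4) - 4 * ue n u (n - 3) + 5 * ue n u (n - 2) - 2 * ue n u (n - 1) := by
  rw [Matrix.mulVec, dotProduct]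
  rw [dot_eq_sum _ ({⟨n - 4, by omega⟩, ⟨n - 3, by omega⟩, ⟨n - 2, by omega⟩,
      ⟨n - 1, by omega⟩} : Finset (Fin n))]
  · rw [Finset.sum_insert (by simp only [Finset.mem_insert, Finset.mem_singleton,
        Fin.ext_iff, Fin.val_mk]; omega),
      Finset.sum_insert (by simp only [Finset.mem_insert, Finset.mem_singleton,
        Fin.ext_iff, Fin.val_mk]; omega),
      Finset.sum_insert (by simp only [Finset.mem_singleton, Fin.ext_iff, Fin.val_mk]; omega),
      Finset.sum_singleton]
    have h0 : A_CF n ⟨n - 2, by omega⟩ ⟨n - 4, by omega⟩ = 1 := by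
      rw [A_CF_apply]; simp only [Fin.val_mk]; split_ifs <;> (first | (exfalso; omega) | norm_num)
    have h1 : A_CF n ⟨n - 2, by omega⟩ ⟨n - 3, by omega⟩ = -4 := by
      rw [A_CF_apply]; simp only [Fin.val_mk]; split_ifs <;> (first | (exfalso; omega) | norm_num)
    have h2 : A_CF n ⟨n - 2, by omega⟩ ⟨n - 2, by omega⟩ = 5 := by
      rw [A_CF_apply]; simp only [Fin.val_mk]; split_ifs <;> (first | (exfalso; omega) | norm_num)
    have h3 : A_CF n ⟨n - 2, by omega⟩ ⟨n - 1, by omega⟩ = -2 := by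
      rw [A_CF_apply]; simp only [Fin.val_mk]; split_ifs <;> (first | (exfalso; omega) | norm_num)
    rw [h0, h1, h2, h3, ue_eq n u (n - 4) (by omega), ue_eq n u (n - 3) (by omega),
      ue_eq n u (n - 2) (by omega), ue_eq n u (n - 1) (by omega)]
    ring
  · intro j hj
    simp only [Finset.mem_insert, Finset.mem_singleton, Fin.ext_iff, Fin.val_mk] at hj
    rw [A_CF_eq_zero n _ j (by simp only [Fin.val_mk]; omega), zero_mul]

lemma rowN1 (n : ℕ) (hn : 5 ≤ n) (u : Fin n → ℝ) :
    (A_CF n).mulVec u ⟨n - 1, by omega⟩ =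
      2 * ue n u (n - 3) - 4 * ue n u (n - 2) + 2 * ue n u (n - 1) := by
  rw [Matrix.mulVec, dotProduct]
  rw [dot_eq_sum _ ({⟨n - 3, by omega⟩, ⟨n - 2, by omega⟩, ⟨n - 1, by omega⟩} :
      Finset (Fin n))]
  · rw [Finset.sum_insert (by simp only [Finset.mem_insert, Finset.mem_singleton,
        Fin.ext_iff, Fin.val_mk]; omega),
      Finset.sum_insert (by simp only [Finset.mem_singleton, Fin.ext_iff, Fin.val_mk]; omega),
      Finset.sum_singleton]
    have h0 : A_CF n ⟨n - 1, by omega⟩ ⟨n - 3, by omega⟩ = 2 := by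
      rw [A_CF_apply]; simp only [Fin.val_mk]; split_ifs <;> (first | (exfalso; omega) | norm_num)
    have h1 : A_CF n ⟨n - 1, by omega⟩ ⟨n - 2, by omega⟩ = -4 := by
      rw [A_CF_apply]; simp only [Fin.val_mk]; split_ifs <;> (first | (exfalso; omega) | norm_num)
    have h2 : A_CF n ⟨n - 1, by omega⟩ ⟨n - 1, by omega⟩ = 2 := by
      rw [A_CF_apply]; simp only [Fin.val_mk]; split_ifs <;> (first | (exfalso; omega) | norm_num)
    rw [h0, h1, h2, ue_eq n u (n - 3) (by omega), ue_eq n u (n - 2) (by omega),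
      ue_eq n u (n - 1) (by omega)]
    ring
  · intro j hj
    simp only [Finset.mem_insert, Finset.mem_singleton, Fin.ext_iff, Fin.val_mk] at hj
    rw [A_CF_eq_zero n _ j (by simp only [Fin.val_mk]; omega), zero_mul]

/-- The discrete second-difference / "bending moment" sequence. -/
noncomputable def Wcf (n : ℕ) (u : Fin n → ℝ) : ℕ → ℝ := fun k =>
  if k = 0 then 2 * ue n u 0
  else if k = 1 then ue n u 1 - 2 * ue n u 0
  else if k ≤ n - 1 then ue n u k - 2 * ue n u (k - 1) + ue n u (k - 2)
  else if k = n then 0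
  else if k = n + 1 then ue n u (n - 1) - 2 * ue n u (n - 2) + ue n u (n - 3)
  else 0

lemma Wcf0 (n : ℕ) (u : Fin n → ℝ) : Wcf n u 0 = 2 * ue n u 0 := rfl

lemma Wcf1 (n : ℕ) (u : Fin n → ℝ) : Wcf n u 1 = ue n u 1 - 2 * ue n u 0 := rfl

lemma WcfMid (n : ℕ) (u : Fin n → ℝ) (k : ℕ) (h2 : 2 ≤ k) (hk : k ≤ n - 1) :
    Wcf n u k = ue n u k - 2 * ue n u (k - 1) + ue n u (k - 2) := by
  unfold Wcf
  rw [if_neg (by omega), if_neg (by omega), if_pos hk]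

lemma WcfN (n : ℕ) (u : Fin n → ℝ) (hn : 5 ≤ n) : Wcf n u n = 0 := by
  unfold Wcf
  rw [if_neg (by omega), if_neg (by omega), if_neg (by omega), if_pos rfl]

lemma WcfN1 (n : ℕ) (u : Fin n → ℝ) (hn : 5 ≤ n) :
    Wcf n u (n + 1) = ue n u (n - 1) - 2 * ue n u (n - 2) + ue n u (n - 3) := by
  unfold Wcf
  rw [if_neg (by omega), if_neg (by omega), if_neg (by omega), if_neg (by omega), if_pos rfl]

/-- A function on `Fin n` is strictly monotone if consecutive values increase. -/
lemma strictMono_of_succ_lt {n : ℕ} (f : Fin n → ℝ)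
    (h : ∀ k (hk : k + 1 < n), f ⟨k, by omega⟩ < f ⟨k + 1, hk⟩) : StrictMono f := by
  have key : ∀ (d a b : ℕ) (ha : a < n) (hb : b < n), a + d + 1 = b →
      f ⟨a, ha⟩ < f ⟨b, hb⟩ := by
    intro d
    induction d with
    | zero =>
        intro a b ha hb heq
        subst heq
        exact h a hb
    | succ d ih =>
        intro a b ha hb heq
        subst heq
        exact lt_trans (ih a (a + d + 1) ha (by omega) rfl) (h (a + d + 1) (by omega))
  intro a b hab
  have h' : (a : ℕ) < (b : ℕ) := hab
  exact key ((b : ℕ) - (a : ℕ) - 1) (a : ℕ) (b : ℕ) a.isLt b.isLt (by omega)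

/-- Any solution `u` of the nonlinear finite-difference system
`A u = h⁴ K exp(-u)` with the clamped-free beam matrix `A` is positive and
strictly increasing: `0 < u₁` and `uᵢ < uᵢ₊₁`. -/
theorem A_CF_solution_pos_strictMono (n : ℕ) (hn : 5 ≤ n) (K h : ℝ)
    (hK : 0 < K) (hh : 0 < h) (u : Fin n → ℝ)
    (hu : ∀ i : Fin n, (A_CF n).mulVec u i = h ^ 4 * K * Real.exp (-(u i))) :
    0 < u ⟨0, by omega⟩ ∧ StrictMono u := by
  set F : ℕ → ℝ := fun k => h ^ 4 * K * Real.exp (-(ue n u (k - 1))) with hF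
  have hFpos : ∀ k, 0 < F k := fun k =>
    mul_pos (mul_pos (pow_pos hh 4) hK) (Real.exp_pos _)
  have hu' : ∀ (k : ℕ) (hk : k < n), (A_CF n).mulVec u ⟨k, hk⟩ = F (k + 1) := by
    intro k hk
    rw [hu ⟨k, hk⟩, hF]
    simp only [Nat.add_sub_cancel]
    rw [ue_eq n u k hk]
  -- main structural identity: second differences of W give F
  have hW : ∀ k, 1 ≤ k → k ≤ n →
      Wcf n u (k + 1) - 2 * Wcf n u k + Wcf n u (k - 1) = F k := by
    intro k h1 h2
    by_cases hk1 : k = 1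
    · subst hk1
      rw [show (1:ℕ) + 1 = 2 from rfl, show (1:ℕ) - 1 = 0 from rfl]
      rw [WcfMid n u 2 (by omega) (by omega), Wcf1, Wcf0]
      have e : F 1 = 7 * ue n u 0 - 4 * ue n u 1 + ue n u 2 :=
        (hu' 0 (by omega)).symm.trans (row0 n hn u)
      norm_num
      linarith [e]
    by_cases hk2 : k = 2
    · subst hk2
      rw [show (2:ℕ) + 1 = 3 from rfl, show (2:ℕ) - 1 = 1 from rfl]
      rw [WcfMid n u 3 (by omega) (by omega), WcfMid n u 2 (by omega) (by omega), Wcf1]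
      have e := (hu' 1 (by omega)).symm.trans (row1 n hn u)
      norm_num at e
      norm_num
      linarith [e]
    by_cases hkn : k = n
    · rw [hkn]
      rw [WcfN1 n u hn, WcfN n u hn, WcfMid n u (n - 1) (by omega) (by omega)]
      rw [show n - 1 - 1 = n - 2 by omega, show n - 1 - 2 = n - 3 by omega]
      have e := (hu' (n - 1) (by omega)).symm.trans (rowN1 n hn u)
      rw [show n - 1 + 1 = n by omega] at e
      linarith [e]
    by_cases hkn1 : k = n - 1
    · rw [hkn1]
      rw [show n - 1 + 1 = n by omega, show n - 1 - 1 = n - 2 by omega]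
      rw [WcfN n u hn, WcfMid n u (n - 1) (by omega) (by omega),
        WcfMid n u (n - 2) (by omega) (by omega)]
      rw [show n - 1 - 1 = n - 2 by omega, show n - 1 - 2 = n - 3 by omega,
        show n - 2 - 1 = n - 3 by omega, show n - 2 - 2 = n - 4 by omega]
      have e := (hu' (n - 2) (by omega)).symm.trans (rowN2 n hn u)
      rw [show n - 2 + 1 = n - 1 by omega] at e
      linarith [e]
    -- middle case: 3 ≤ k ≤ n - 2
    · have hk3 : 3 ≤ k := by omega
      have hkn2 : k ≤ n - 2 := by omega
      rw [WcfMid n u (k + 1) (by omega) (by omega), WcfMid n u k (by omega) (by omega),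
        WcfMid n u (k - 1) (by omega) (by omega)]
      rw [show k + 1 - 1 = k by omega, show k + 1 - 2 = k - 1 by omega,
        show k - 1 - 1 = k - 2 by omega, show k - 1 - 2 = k - 3 by omega]
      have e := (hu' (k - 1) (by omega)).symm.trans (rowMid n hn u (k - 1) (by omega) (by omega))
      rw [show k - 1 - 2 = k - 3 by omega, show k - 1 - 1 = k - 2 by omega,
        show k - 1 + 1 = k by omega, show k - 1 + 2 = k + 1 by omega] at e
      linarith [e]
  -- shear T k = W (k+1) - W k satisfies T k - T (k-1) = F k
  have hT : ∀ k, 1 ≤ k → k ≤ n →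
      (Wcf n u (k + 1) - Wcf n u k) - (Wcf n u k - Wcf n u (k - 1)) = F k := by
    intro k h1 h2
    have := hW k h1 h2
    linarith
  -- the value of W at n - 1
  have hWn1eq : Wcf n u (n - 1) = F n / 2 := by
    have h1 := hW n (by omega) le_rfl
    rw [WcfN1 n u hn, WcfN n u hn] at h1
    have hm := WcfMid n u (n - 1) (by omega) (by omega)
    rw [show n - 1 - 1 = n - 2 by omega, show n - 1 - 2 = n - 3 by omega] at hm
    linarith [h1, hm]
  -- T is negative below n - 1
  have Tneg : ∀ m k, k + m = n - 1 → Wcf n u (k + 1) - Wcf n u k < 0 := by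
    intro m
    induction m with
    | zero =>
        intro k hk
        have hk' : k = n - 1 := by omega
        subst hk'
        rw [show n - 1 + 1 = n by omega, WcfN n u hn]
        have := hFpos n
        linarith [hWn1eq]
    | succ m ih =>
        intro k hk
        have h2 := ih (k + 1) (by omega)
        have h3 := hT (k + 1) (by omega) (by omega)
        rw [show k + 1 - 1 = k by omega] at h3
        have := hFpos (k + 1)
        linarith
  -- W is positive below n
  have Wpos : ∀ m k, k + m = n - 1 → 0 < Wcf n u k := by
    intro m
    induction m with
    | zero =>
        intro k hk
        have hk' : k = n - 1 := by omega
        subst hk'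
        rw [hWn1eq]
        linarith [hFpos n]
    | succ m ih =>
        intro k hk
        have h1 := ih (k + 1) (by omega)
        have h2 := Tneg (m + 1) k hk
        linarith
  have Wpos' : ∀ k, k ≤ n - 1 → 0 < Wcf n u k := fun k hk =>
    Wpos (n - 1 - k) k (by omega)
  -- positivity of u₀
  have hu0 : 0 < u ⟨0, by omega⟩ := by
    have h0 := Wpos' 0 (by omega)
    rw [Wcf0, ue_eq n u 0 (by omega)] at h0
    linarith
  refine ⟨hu0, ?_⟩
  -- differences are positive
  have dpos : ∀ m, m ≤ n - 2 → 0 < ue n u (m + 1) - ue n u m := by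
    intro m
    induction m with
    | zero =>
        intro _
        have h1 := Wpos' 1 (by omega)
        have h0 := Wpos' 0 (by omega)
        rw [Wcf1] at h1
        rw [Wcf0] at h0
        norm_num
        linarith
    | succ m ih =>
        intro hm
        have h1 := ih (by omega)
        have h2 := Wpos' (m + 2) (by omega)
        have hw := WcfMid n u (m + 2) (by omega) (by omega)
        rw [show m + 2 - 1 = m + 1 by omega, show m + 2 - 2 = m by omega] at hw
        linarith
  apply strictMono_of_succ_lt
  intro k hk
  have := dpos k (by omega)
  rw [ue_eq n u (k + 1) hk, ue_eq n u k (by omega)] at this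
  linarith
end
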